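/- In the MDP constructed from an X3C instance (states S = {1,…,n} ∪ {⊥, n+1, n+2, n+3, n+4}, initial state 1, actions Act = {1,…,n+3}, transitions P(s, a, s+1) = 1 if a = s and P(s, a, ⊥) = 1 otherwise for s, a ∈ {1,…,n+3}, with ⊥ and n+4 absorbing), a policy σ reaches the goal state n+4 from the initial state 1 with probability greater than 1/2 if and only if σ(s) = s for every s ∈ {1,…,n+3}; in that case the reachability probability equals 1, and otherwise it equals 0. -/

import Mathlib

namespace Paper12

open scoped NNReal

variable {S : Type} [Fintype S] [DecidableEq S]

/-- Probability of reaching the goal set `G` within `n` steps in the Markov chain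
with transition matrix `T`. -/
def reachAux (T : S → S → ℝ≥0) (G : Finset S) : ℕ → S → ℝ≥0
  | 0, s => if s ∈ G then 1 else 0
  | n + 1, s => if s ∈ G then 1 else ∑ s', T s s' * reachAux T G n s'

/-- Probability of reaching the goal set `G` from state `s` in the Markov chain
with transition matrix `T`. -/
noncomputable def reachProb (T : S → S → ℝ≥0) (G : Finset S) (s : S) : ℝ≥0 :=
  ⨆ n, reachAux T G n s

section X3C

variable (n : ℕ)

/-- States of the MDP constructed from an X3C instance: the indices `0, …, n + 2`
represent the paper's states `1, …, n + 3`, index `n + 3` represents the goal state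
`n + 4`, and index `n + 4` represents the sink state `⊥`. -/
abbrev St := Fin (n + 5)

/-- Actions `1, …, n + 3` of the constructed MDP. -/
abbrev Ac := Fin (n + 3)

/-- The goal state `n + 4`. -/
def goalSt : St n := ⟨n + 3, by omega⟩

/-- The sink state `⊥`. -/
def botSt : St n := ⟨n + 4, by omega⟩

/-- The initial state `1`. -/
def initSt : St n := ⟨0, by omega⟩

/-- The (deterministic) successor under policy `σ`: in each non-absorbing state `s`,
the unique action `a = s` progresses to `s + 1` while every other action leads to the
sink `⊥`; the goal state and the sink are absorbing. -/
def stepSt (σ : St n → Ac n) (s : St n) : St n :=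
  if h : (s : ℕ) < n + 3 then
    (if ((σ s) : ℕ) = (s : ℕ) then ⟨(s : ℕ) + 1, by omega⟩ else botSt n)
  else s

/-- The transition matrix of the Markov chain induced by policy `σ` (all transitions
of the constructed MDP are Dirac distributions). -/
def transMat (σ : St n → Ac n) (s s' : St n) : ℝ≥0 :=
  if s' = stepSt n σ s then 1 else 0

end X3C


lemma reachAux_succ (n : ℕ) (σ : St n → Ac n) (G : Finset (St n)) (k : ℕ) (s : St n) :
    reachAux (transMat n σ) G (k+1) s =
      if s ∈ G then 1 else reachAux (transMat n σ) G k (stepSt n σ s) := by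
  simp [reachAux, transMat, ite_mul, Finset.sum_ite_eq']

lemma reachAux_eq (n : ℕ) (σ : St n → Ac n) (k : ℕ) (s : St n) :
    reachAux (transMat n σ) {goalSt n} k s =
      if ∃ j ≤ k, (stepSt n σ)^[j] s = goalSt n then 1 else 0 := by
  induction k generalizing s with
  | zero => simp [reachAux]
  | succ k ih =>
    rw [reachAux_succ, ih]
    by_cases hs : s = goalSt n
    · have : ∃ j ≤ k+1, (stepSt n σ)^[j] s = goalSt n := ⟨0, by omega, hs⟩
      subst hs
      simp [this]
    · simp only [Finset.mem_singleton, hs, if_false]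
      congr 1
      simp only [eq_iff_iff]
      constructor
      · rintro ⟨j, hj, h⟩
        exact ⟨j+1, by omega, by rw [Function.iterate_succ_apply]; exact h⟩
      · rintro ⟨j, hj, h⟩
        match j, h with
        | 0, h => exact absurd h hs
        | j+1, h => exact ⟨j, by omega, by rwa [Function.iterate_succ_apply] at h⟩

lemma step_id (n : ℕ) (σ : St n → Ac n) (k : ℕ) (hk : k < n + 3)
    (hσ : (σ ⟨k, by omega⟩ : ℕ) = k) :
    stepSt n σ ⟨k, by omega⟩ = ⟨k + 1, by omega⟩ := by
  simp [stepSt, hk, hσ]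

lemma step_bot (n : ℕ) (σ : St n → Ac n) : stepSt n σ (botSt n) = botSt n := by
  simp [stepSt, botSt]

lemma reach_le_one (n : ℕ) (σ : St n → Ac n) (k : ℕ) :
    reachAux (transMat n σ) {goalSt n} k (initSt n) ≤ 1 := by
  rw [reachAux_eq]; split <;> simp

lemma good_traj (n : ℕ) (σ : St n → Ac n)
    (h : ∀ s : St n, (s : ℕ) < n + 3 → ((σ s) : ℕ) = (s : ℕ)) :
    ∀ k (hk : k ≤ n + 3), (stepSt n σ)^[k] (initSt n) = ⟨k, by omega⟩ := by
  intro k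
  induction k with
  | zero => intro _; rfl
  | succ k ih =>
    intro hk
    rw [Function.iterate_succ_apply', ih (by omega)]
    exact step_id n σ k (by omega) (h _ (by exact (by omega : k < n + 3)))

lemma good_val (n : ℕ) (σ : St n → Ac n)
    (h : ∀ s : St n, (s : ℕ) < n + 3 → ((σ s) : ℕ) = (s : ℕ)) :
    reachProb (transMat n σ) {goalSt n} (initSt n) = 1 := by
  apply le_antisymm
  · exact ciSup_le (reach_le_one n σ)
  · have hit : (stepSt n σ)^[n+3] (initSt n) = goalSt n := by
      rw [good_traj n σ h (n+3) le_rfl]; rfl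
    have h1 : reachAux (transMat n σ) {goalSt n} (n + 3) (initSt n) = 1 := by
      rw [reachAux_eq]
      exact if_pos ⟨n+3, le_rfl, hit⟩
    calc (1 : ℝ≥0) = reachAux (transMat n σ) {goalSt n} (n + 3) (initSt n) := h1.symm
    _ ≤ _ := le_ciSup (f := fun k => reachAux (transMat n σ) {goalSt n} k (initSt n))
        ⟨1, by rintro x ⟨k, rfl⟩; exact reach_le_one n σ k⟩ (n + 3)

lemma bad_val (n : ℕ) (σ : St n → Ac n)
    (h : ¬ ∀ s : St n, (s : ℕ) < n + 3 → ((σ s) : ℕ) = (s : ℕ)) :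
    reachProb (transMat n σ) {goalSt n} (initSt n) = 0 := by
  classical
  push_neg at h
  obtain ⟨s, hs, hσs⟩ := h
  have hex : ∃ k, ∃ hk : k < n + 3, (σ ⟨k, by omega⟩ : ℕ) ≠ k := by
    refine ⟨(s : ℕ), hs, ?_⟩
    simpa [Fin.eta] using hσs
  obtain ⟨hmlt, hmσ⟩ := Nat.find_spec hex
  set m := Nat.find hex with hm
  have hmin : ∀ j (hj : j < m) (hj3 : j < n + 3), (σ ⟨j, by omega⟩ : ℕ) = j := by
    intro j hj hj3
    by_contra hc
    exact Nat.find_min hex hj ⟨hj3, hc⟩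
  have traj : ∀ k (hk : k ≤ m), (stepSt n σ)^[k] (initSt n) = ⟨k, by omega⟩ := by
    intro k
    induction k with
    | zero => intro _; rfl
    | succ k ih =>
      intro hk
      rw [Function.iterate_succ_apply', ih (by omega)]
      exact step_id n σ k (by omega) (hmin k (by omega) (by omega))
  have notgoal : ∀ k, (stepSt n σ)^[k] (initSt n) ≠ goalSt n := by
    intro k
    rcases le_or_gt k m with hk | hk
    · rw [traj k hk]
      simp only [goalSt, ne_eq, Fin.mk.injEq]
      omega
    · obtain ⟨j, rfl⟩ : ∃ j, k = (m + 1) + j := ⟨k - (m+1), by omega⟩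
      have hb : (stepSt n σ)^[m+1+j] (initSt n) = botSt n := by
        induction j with
        | zero =>
          rw [Nat.add_zero, Function.iterate_succ_apply', traj m le_rfl]
          simp [stepSt, hmlt, hmσ]
          exact fun h => absurd h hmσ
        | succ j ihj =>
          have he : m + 1 + (j+1) = (m+1+j) + 1 := by omega
          rw [he, Function.iterate_succ_apply', ihj (by omega)]
          exact step_bot n σ
      rw [hb]
      simp only [botSt, goalSt, ne_eq, Fin.mk.injEq]
      omega
  have hz : ∀ k, reachAux (transMat n σ) {goalSt n} k (initSt n) = 0 := by
    intro k
    rw [reachAux_eq, if_neg]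
    rintro ⟨j, _, hj⟩
    exact notgoal j hj
  simp only [reachProb, hz, ciSup_const]

/-- In the MDP constructed from an X3C instance, a policy `σ`
reaches the goal state from the initial state with probability greater than `1/2`
iff `σ(s) = s` for every state `s ∈ {1, …, n + 3}`; in that case the reachability
probability equals `1`, and otherwise it equals `0`. -/
theorem x3c_mdp_policy_value (n : ℕ) (σ : St n → Ac n) :
    ((1 / 2 : ℝ≥0) < reachProb (transMat n σ) {goalSt n} (initSt n) ↔
      ∀ s : St n, (s : ℕ) < n + 3 → ((σ s) : ℕ) = (s : ℕ)) ∧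
    ((∀ s : St n, (s : ℕ) < n + 3 → ((σ s) : ℕ) = (s : ℕ)) →
      reachProb (transMat n σ) {goalSt n} (initSt n) = 1) ∧
    (¬ (∀ s : St n, (s : ℕ) < n + 3 → ((σ s) : ℕ) = (s : ℕ)) →
      reachProb (transMat n σ) {goalSt n} (initSt n) = 0) := by
  constructor
  · constructor
    · intro hlt
      by_contra hbad
      rw [bad_val n σ hbad] at hlt
      exact absurd hlt (by simp)
    · intro h
      rw [good_val n σ h, ← NNReal.coe_lt_coe]
      norm_num
  · exact ⟨good_val n σ, bad_val n σ⟩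

end Paper12
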